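/- For the binary operation x ∘ y = x + 1 (mod 2) on the two-element set ℤ/2ℤ, the associative spectrum satisfies s(n) = 2 for every n ≥ 3. More precisely, for every bracketing B of size n and all c_1,…,c_n ∈ ℤ/2ℤ, the induced regular operation satisfies b(c_1,…,c_n) = c_1 + d (mod 2), where d is the left depth of x_1 in B. (Paper's Proposition 4.1.) -/

import Mathlib

/-- A bracketing of size `n`: a full binary tree with `n` leaves. -/
inductive Bracketing : ℕ → Type
  | leaf : Bracketing 1
  | node : {k l : ℕ} → Bracketing k → Bracketing l → Bracketing (k + l)

/-- The `n`-ary regular operation induced by a bracketing on a magma `(G, op)`. -/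
def Bracketing.eval {G : Type*} (op : G → G → G) : {n : ℕ} → Bracketing n → (Fin n → G) → G
  | _, .leaf, v => v 0
  | _, .node P Q, v =>
      op (Bracketing.eval op P (fun i => v (Fin.castAdd _ i)))
         (Bracketing.eval op Q (fun i => v (Fin.natAdd _ i)))

/-- The associative spectrum: the number of distinct `n`-ary regular operations. -/
noncomputable def assocSpectrum {G : Type*} (op : G → G → G) (n : ℕ) : ℕ :=
  Nat.card {f : (Fin n → G) → G // ∃ B : Bracketing n, f = Bracketing.eval op B}

/-- The depth of the `i`-th leaf of a bracketing. -/
def Bracketing.depth : {n : ℕ} → Bracketing n → Fin n → ℕ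
  | _, .leaf, _ => 0
  | _, .node (k := k) P Q, i =>
      if h : (i : ℕ) < k then Bracketing.depth P ⟨i, h⟩ + 1
      else Bracketing.depth Q ⟨(i : ℕ) - k, by have := i.isLt; omega⟩ + 1

/-- The right depth of the `i`-th leaf of a bracketing. -/
def Bracketing.rdepth : {n : ℕ} → Bracketing n → Fin n → ℕ
  | _, .leaf, _ => 0
  | _, .node (k := k) P Q, i =>
      if h : (i : ℕ) < k then Bracketing.rdepth P ⟨i, h⟩
      else Bracketing.rdepth Q ⟨(i : ℕ) - k, by have := i.isLt; omega⟩ + 1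

/-- The left depth of the `i`-th leaf of a bracketing. -/
def Bracketing.ldepth : {n : ℕ} → Bracketing n → Fin n → ℕ
  | _, .leaf, _ => 0
  | _, .node (k := k) P Q, i =>
      if h : (i : ℕ) < k then Bracketing.ldepth P ⟨i, h⟩ + 1
      else Bracketing.ldepth Q ⟨(i : ℕ) - k, by have := i.isLt; omega⟩

/-- A magma operation is Catalan if distinct bracketings of equal size
    induce distinct regular operations. -/
def IsCatalanOp {G : Type*} (op : G → G → G) : Prop :=
  ∀ (n : ℕ) (B₁ B₂ : Bracketing n), B₁ ≠ B₂ →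
    Bracketing.eval op B₁ ≠ Bracketing.eval op B₂

theorem Bracketing.one_le : ∀ {n} (_ : Bracketing n), 1 ≤ n := by
  intro n B
  induction B with
  | leaf => omega
  | node P Q ihP ihQ => omega

def Bracketing.pad : {n : ℕ} → Bracketing n → Bracketing (n + 1)
  | _, .leaf => .node .leaf .leaf
  | _, .node (k := k) (l := l) P Q => .node (k := k) (l := l + 1) P Q.pad

theorem ldepth_pad {k l : ℕ} (P : Bracketing k) (Q : Bracketing l) :
    (Bracketing.node P Q).pad.ldepth ⟨0, by have := P.one_le; omega⟩
      = (Bracketing.node P Q).ldepth ⟨0, by have := P.one_le; omega⟩ := by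
  have hk : 0 < k := P.one_le
  simp [Bracketing.pad, Bracketing.ldepth, hk]

theorem exists_parity : ∀ n, ∀ _hn : 3 ≤ n,
    (∃ B : Bracketing n, B.ldepth ⟨0, Nat.lt_of_lt_of_le (by decide) _hn⟩ = 1) ∧
    (∃ B : Bracketing n, B.ldepth ⟨0, Nat.lt_of_lt_of_le (by decide) _hn⟩ = 2) := by
  intro n
  induction n with
  | zero => omega
  | succ m ih =>
    intro h
    by_cases hm : 3 ≤ m
    · obtain ⟨⟨B1, h1⟩, ⟨B2, h2⟩⟩ := ih hm
      constructor
      · refine ⟨B1.pad, ?_⟩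
        cases B1 with
        | leaf => omega
        | node P Q => rw [ldepth_pad]; exact h1
      · refine ⟨B2.pad, ?_⟩
        cases B2 with
        | leaf => omega
        | node P Q => rw [ldepth_pad]; exact h2
    · have : m = 2 := by omega
      subst this
      exact ⟨⟨.node (k := 1) (l := 2) .leaf (.node .leaf .leaf), rfl⟩,
             ⟨.node (k := 2) (l := 1) (.node .leaf .leaf) .leaf, rfl⟩⟩

theorem eval_first : ∀ {n} (B : Bracketing n) (c : Fin n → ZMod 2) (h : 0 < n),
    Bracketing.eval (fun x _ : ZMod 2 => x + 1) B c
      = c ⟨0, h⟩ + (B.ldepth ⟨0, h⟩ : ZMod 2) := by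
  intro n B
  induction B with
  | leaf =>
    intro c h
    simp [Bracketing.eval, Bracketing.ldepth]
  | node P Q ihP ihQ =>
    intro c h
    have hk : 0 < _ := P.one_le
    rw [Bracketing.eval, ihP _ hk]
    have : (Fin.castAdd _ ⟨0, hk⟩ : Fin _) = ⟨0, h⟩ := by ext; simp
    rw [this]
    simp only [Bracketing.ldepth, hk, dif_pos]
    push_cast
    ring

/-- Paper's Proposition 4.1: for `x ∘ y = x + 1 (mod 2)`, `s(n) = 2` for `n ≥ 3`; more
precisely `b(c₁,…,cₙ) = c₁ + d (mod 2)` where `d` is the left depth of `x₁` in `B`. -/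
theorem stmt11 (n : ℕ) (hn : 3 ≤ n) :
    assocSpectrum (fun x _ : ZMod 2 => x + 1) n = 2 ∧
    ∀ (B : Bracketing n) (c : Fin n → ZMod 2),
      Bracketing.eval (fun x _ : ZMod 2 => x + 1) B c
        = c ⟨0, by omega⟩ + (B.ldepth ⟨0, by omega⟩ : ZMod 2) := by
  have hpos : 0 < n := by omega
  refine ⟨?_, fun B c => eval_first B c hpos⟩
  set f0 : (Fin n → ZMod 2) → ZMod 2 := fun v => v ⟨0, hpos⟩ with hf0
  set f1 : (Fin n → ZMod 2) → ZMod 2 := fun v => v ⟨0, hpos⟩ + 1 with hf1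
  have hset : {f : (Fin n → ZMod 2) → ZMod 2 |
      ∃ B : Bracketing n, f = Bracketing.eval (fun x _ : ZMod 2 => x + 1) B}
      = {f0, f1} := by
    ext f
    constructor
    · rintro ⟨B, rfl⟩
      have hev : Bracketing.eval (fun x _ : ZMod 2 => x + 1) B
          = fun c => c ⟨0, hpos⟩ + (B.ldepth ⟨0, hpos⟩ : ZMod 2) := by
        funext c; exact eval_first B c hpos
      have h2 : ((B.ldepth ⟨0, hpos⟩ : ℕ) : ZMod 2) = 0 ∨
          ((B.ldepth ⟨0, hpos⟩ : ℕ) : ZMod 2) = 1 := by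
        generalize ((B.ldepth ⟨0, hpos⟩ : ℕ) : ZMod 2) = x
        revert x; decide
      rcases h2 with h2 | h2
      · left; rw [hev, h2]; funext c; simp [hf0]
      · right; rw [hev, h2]; funext c; simp [hf1]
    · rintro (rfl | rfl)
      · obtain ⟨B, hB⟩ := (exists_parity n hn).2
        refine ⟨B, ?_⟩
        funext c
        rw [eval_first B c hpos, hB]
        simp [hf0]
        decide
      · obtain ⟨B, hB⟩ := (exists_parity n hn).1
        refine ⟨B, ?_⟩
        funext c
        rw [eval_first B c hpos, hB]
        simp [hf1]
  have hne : f0 ≠ f1 := by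
    intro h
    have := congrFun h (fun _ => 0)
    simp [hf0, hf1] at this
  rw [assocSpectrum]
  have : {f : (Fin n → ZMod 2) → ZMod 2 // ∃ B : Bracketing n,
      f = Bracketing.eval (fun x _ : ZMod 2 => x + 1) B}
      = {f : (Fin n → ZMod 2) → ZMod 2 //
        f ∈ ({f0, f1} : Set ((Fin n → ZMod 2) → ZMod 2))} := by
    rw [← hset]; rfl
  rw [this, Nat.card_coe_set_eq, Set.ncard_pair hne]
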